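/- Fix H ∈ (0,1) and an integer r ≥ 3. Then |ρ_H(r)| ≤ 4·r^{2H}·log(1−1/r²) − r^{2H}·log(1−4/r²) ≤ (243/20)·r^{2H−4} ≤ (243/20)·r^{−2}. -/

import Mathlib

open Real

/-- `ρ_H(r)` from the paper. Here `x ^ y` with real exponent denotes `Real.rpow`. -/
noncomputable def rhoH (H : ℝ) (r : ℤ) : ℝ :=
  (-(|(r : ℝ) - 2| ^ (2 * H)) + 4 * |(r : ℝ) - 1| ^ (2 * H) - 6 * |(r : ℝ)| ^ (2 * H)
      + 4 * |(r : ℝ) + 1| ^ (2 * H) - |(r : ℝ) + 2| ^ (2 * H)) / 2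

private lemma hd1 (p u : ℝ) (h : (0:ℝ) < 1 + u) :
    HasDerivAt (fun v : ℝ => (1 + v) ^ p) (p * (1 + u) ^ (p - 1)) u := by
  have hi : HasDerivAt (fun v : ℝ => 1 + v) 1 u := (hasDerivAt_id u).const_add 1
  simpa [Function.comp_def] using (Real.hasDerivAt_rpow_const (p := p) (Or.inl h.ne')).comp u hi

private lemma hd2 (p u : ℝ) (h : (0:ℝ) < 1 - u) :
    HasDerivAt (fun v : ℝ => (1 - v) ^ p) (-(p * (1 - u) ^ (p - 1))) u := by
  have hi : HasDerivAt (fun v : ℝ => 1 - v) (-1) u := (hasDerivAt_id u).const_sub 1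
  simpa [Function.comp_def] using (Real.hasDerivAt_rpow_const (p := p) (Or.inl h.ne')).comp u hi

private lemma hd3 (p u : ℝ) (h : (0:ℝ) < 1 + 2*u) :
    HasDerivAt (fun v : ℝ => (1 + 2*v) ^ p) (2 * (p * (1 + 2*u) ^ (p - 1))) u := by
  have hi : HasDerivAt (fun v : ℝ => 1 + 2*v) 2 u := by
    simpa using ((hasDerivAt_id u).const_mul 2).const_add 1
  have := (Real.hasDerivAt_rpow_const (p := p) (Or.inl h.ne')).comp u hi
  simpa [mul_comm, Function.comp_def] using this

private lemma hd4 (p u : ℝ) (h : (0:ℝ) < 1 - 2*u) :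
    HasDerivAt (fun v : ℝ => (1 - 2*v) ^ p) (-(2 * (p * (1 - 2*u) ^ (p - 1)))) u := by
  have hi : HasDerivAt (fun v : ℝ => 1 - 2*v) (-2) u := by
    simpa using ((hasDerivAt_id u).const_mul 2).const_sub 1
  have := (Real.hasDerivAt_rpow_const (p := p) (Or.inl h.ne')).comp u hi
  exact this.congr_deriv (by ring)

private lemma hl1 (u : ℝ) (h : (0:ℝ) < 1 + u) :
    HasDerivAt (fun v : ℝ => Real.log (1 + v)) ((1 + u) ^ (-1:ℝ)) u := by
  have hi : HasDerivAt (fun v : ℝ => 1 + v) 1 u := (hasDerivAt_id u).const_add 1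
  have := (Real.hasDerivAt_log h.ne').comp u hi
  simpa [Real.rpow_neg_one, Function.comp_def] using this

private lemma hl2 (u : ℝ) (h : (0:ℝ) < 1 - u) :
    HasDerivAt (fun v : ℝ => Real.log (1 - v)) (-((1 - u) ^ (-1:ℝ))) u := by
  have hi : HasDerivAt (fun v : ℝ => 1 - v) (-1) u := (hasDerivAt_id u).const_sub 1
  have := (Real.hasDerivAt_log h.ne').comp u hi
  simpa [Real.rpow_neg_one, Function.comp_def] using this

private lemma hl3 (u : ℝ) (h : (0:ℝ) < 1 + 2*u) :
    HasDerivAt (fun v : ℝ => Real.log (1 + 2*v)) (2 * (1 + 2*u) ^ (-1:ℝ)) u := by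
  have hi : HasDerivAt (fun v : ℝ => 1 + 2*v) 2 u := by
    simpa using ((hasDerivAt_id u).const_mul 2).const_add 1
  have := (Real.hasDerivAt_log h.ne').comp u hi
  simpa [Real.rpow_neg_one, mul_comm, Function.comp_def] using this

private lemma hl4 (u : ℝ) (h : (0:ℝ) < 1 - 2*u) :
    HasDerivAt (fun v : ℝ => Real.log (1 - 2*v)) (-(2 * (1 - 2*u) ^ (-1:ℝ))) u := by
  have hi : HasDerivAt (fun v : ℝ => 1 - 2*v) (-2) u := by
    simpa using ((hasDerivAt_id u).const_mul 2).const_sub 1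
  have := (Real.hasDerivAt_log h.ne').comp u hi
  rw [Real.rpow_neg_one]
  exact this.congr_deriv (by ring)

noncomputable def Fa (a u : ℝ) : ℝ :=
  4*(1+u)^a + 4*(1-u)^a - (1+2*u)^a - (1-2*u)^a - 6
noncomputable def Fa' (a u : ℝ) : ℝ :=
  4*(a*(1+u)^(a-1)) - 4*(a*(1-u)^(a-1)) - 2*(a*(1+2*u)^(a-1)) + 2*(a*(1-2*u)^(a-1))
noncomputable def Fa'' (a u : ℝ) : ℝ :=
  4*(a*(a-1))*(1+u)^(a-2) + 4*(a*(a-1))*(1-u)^(a-2)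
    - 4*(a*(a-1))*(1+2*u)^(a-2) - 4*(a*(a-1))*(1-2*u)^(a-2)
noncomputable def Ga (u : ℝ) : ℝ :=
  8*Real.log (1+u) + 8*Real.log (1-u) - 2*Real.log (1+2*u) - 2*Real.log (1-2*u)
noncomputable def Ga' (u : ℝ) : ℝ :=
  8*(1+u)^(-1:ℝ) - 8*(1-u)^(-1:ℝ) - 4*(1+2*u)^(-1:ℝ) + 4*(1-2*u)^(-1:ℝ)
noncomputable def Ga'' (u : ℝ) : ℝ :=
  -8*(1+u)^(-2:ℝ) - 8*(1-u)^(-2:ℝ) + 8*(1+2*u)^(-2:ℝ) + 8*(1-2*u)^(-2:ℝ)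

variable {a u : ℝ}

lemma hFa (a : ℝ) (h1 : (0:ℝ) < 1+u) (h2 : (0:ℝ) < 1-u) (h3 : (0:ℝ) < 1+2*u)
    (h4 : (0:ℝ) < 1-2*u) : HasDerivAt (Fa a) (Fa' a u) u := by
  unfold Fa Fa'
  have := ((((hd1 a u h1).const_mul 4).add ((hd2 a u h2).const_mul 4)).sub
      (hd3 a u h3)).sub (hd4 a u h4)
  have h := this.sub_const 6
  exact h.congr_deriv (by ring)

lemma hFa' (a : ℝ) (h1 : (0:ℝ) < 1+u) (h2 : (0:ℝ) < 1-u) (h3 : (0:ℝ) < 1+2*u)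
    (h4 : (0:ℝ) < 1-2*u) : HasDerivAt (Fa' a) (Fa'' a u) u := by
  unfold Fa' Fa''
  have := ((((hd1 (a-1) u h1).const_mul (4*a)).sub ((hd2 (a-1) u h2).const_mul (4*a))).sub
      ((hd3 (a-1) u h3).const_mul (2*a))).add ((hd4 (a-1) u h4).const_mul (2*a))
  have e : a - 1 - 1 = a - 2 := by ring
  rw [e] at this
  refine (this.congr_deriv ?_).congr_of_eventuallyEq (Filter.Eventually.of_forall fun v => ?_)
  · ring
  · simp only [Pi.add_apply, Pi.sub_apply]; ring

lemma hGa (h1 : (0:ℝ) < 1+u) (h2 : (0:ℝ) < 1-u) (h3 : (0:ℝ) < 1+2*u)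
    (h4 : (0:ℝ) < 1-2*u) : HasDerivAt Ga (Ga' u) u := by
  unfold Ga Ga'
  have := ((((hl1 u h1).const_mul 8).add ((hl2 u h2).const_mul 8)).sub
      ((hl3 u h3).const_mul 2)).sub ((hl4 u h4).const_mul 2)
  exact this.congr_deriv (by ring)

lemma hGa' (h1 : (0:ℝ) < 1+u) (h2 : (0:ℝ) < 1-u) (h3 : (0:ℝ) < 1+2*u)
    (h4 : (0:ℝ) < 1-2*u) : HasDerivAt Ga' (Ga'' u) u := by
  unfold Ga' Ga''
  have := ((((hd1 (-1) u h1).const_mul 8).sub ((hd2 (-1) u h2).const_mul 8)).sub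
      ((hd3 (-1) u h3).const_mul 4)).add ((hd4 (-1) u h4).const_mul 4)
  have e : (-1:ℝ) - 1 = -2 := by norm_num
  rw [e] at this
  exact this.congr_deriv (by ring)

lemma hk (b : ℝ) (h1 : (0:ℝ) < 1+u) (h2 : (0:ℝ) < 1-u) :
    HasDerivAt (fun v : ℝ => (1+v)^b + (1-v)^b)
      (b*(1+u)^(b-1) - b*(1-u)^(b-1)) u := by
  have := (hd1 b u h1).add (hd2 b u h2)
  exact this.congr_deriv (by ring)

lemma mono_k (b : ℝ) (hb : b ≤ 0) :
    MonotoneOn (fun v : ℝ => (1+v)^b + (1-v)^b) (Set.Icc 0 (2/3 : ℝ)) := by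
  have hpos : ∀ v ∈ Set.Icc (0:ℝ) (2/3 : ℝ), (0:ℝ) < 1 + v ∧ (0:ℝ) < 1 - v := by
    rintro v ⟨hv0, hv1⟩; constructor <;> linarith
  apply monotoneOn_of_deriv_nonneg (convex_Icc _ _)
  · intro v hv
    obtain ⟨h1, h2⟩ := hpos v hv
    exact (hk b h1 h2).differentiableAt.continuousAt.continuousWithinAt
  · intro v hv
    rw [interior_Icc] at hv
    obtain ⟨h1, h2⟩ := hpos v (Set.mem_Icc_of_Ioo hv)
    exact (hk b h1 h2).differentiableAt.differentiableWithinAt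
  · intro v hv
    rw [interior_Icc] at hv
    obtain ⟨h1, h2⟩ := hpos v (Set.mem_Icc_of_Ioo hv)
    rw [(hk b h1 h2).deriv]
    have hcmp : (1+v) ^ (b-1) ≤ (1-v) ^ (b-1) :=
      Real.rpow_le_rpow_of_nonpos h2 (by linarith [hv.1]) (by linarith)
    nlinarith [hcmp, hb]

lemma mono_P (a : ℝ) (ha0 : 0 < a) (ha2 : a < 2) :
    MonotoneOn (fun v : ℝ => 2*((1+v)^(-2:ℝ) + (1-v)^(-2:ℝ))
      - (a*|a-1|)*((1+v)^(a-2) + (1-v)^(a-2))) (Set.Icc 0 (2/3 : ℝ)) := by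
  have hpos : ∀ v ∈ Set.Icc (0:ℝ) (2/3 : ℝ), (0:ℝ) < 1 + v ∧ (0:ℝ) < 1 - v := by
    rintro v ⟨hv0, hv1⟩; constructor <;> linarith
  have hder : ∀ v : ℝ, (0:ℝ) < 1 + v → (0:ℝ) < 1 - v →
      HasDerivAt (fun v : ℝ => 2*((1+v)^(-2:ℝ) + (1-v)^(-2:ℝ))
        - (a*|a-1|)*((1+v)^(a-2) + (1-v)^(a-2)))
      (2*((-2)*(1+v)^(-3:ℝ) - (-2)*(1-v)^(-3:ℝ))
        - (a*|a-1|)*((a-2)*(1+v)^(a-3) - (a-2)*(1-v)^(a-3))) v := by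
    intro v h1 h2
    have := ((hk (-2:ℝ) h1 h2).const_mul 2).sub ((hk (a-2) h1 h2).const_mul (a*|a-1|))
    have e1 : (-2:ℝ) - 1 = -3 := by norm_num
    have e2 : a - 2 - 1 = a - 3 := by ring
    rw [e1, e2] at this
    exact this
  apply monotoneOn_of_deriv_nonneg (convex_Icc _ _)
  · intro v hv
    obtain ⟨h1, h2⟩ := hpos v hv
    exact (hder v h1 h2).differentiableAt.continuousAt.continuousWithinAt
  · intro v hv
    rw [interior_Icc] at hv
    obtain ⟨h1, h2⟩ := hpos v (Set.mem_Icc_of_Ioo hv)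
    exact (hder v h1 h2).differentiableAt.differentiableWithinAt
  · intro v hv
    rw [interior_Icc] at hv
    obtain ⟨h1, h2⟩ := hpos v (Set.mem_Icc_of_Ioo hv)
    rw [(hder v h1 h2).deriv]
    set A := (1+v) ^ (-3:ℝ) with hA
    set B := (1-v) ^ (-3:ℝ) with hB
    set A' := (1+v) ^ (a-3) with hA'
    set B' := (1-v) ^ (a-3) with hB'
    have hBA : A ≤ B := Real.rpow_le_rpow_of_nonpos h2 (by linarith [hv.1]) (by norm_num)
    have hB'A' : A' ≤ B' := Real.rpow_le_rpow_of_nonpos h2 (by linarith [hv.1]) (by linarith)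
    have hBB' : B' ≤ B := Real.rpow_le_rpow_of_exponent_ge h2 (by linarith [hv.1]) (by linarith)
    have hAA' : A ≤ A' := Real.rpow_le_rpow_of_exponent_le (by linarith [hv.1]) (by linarith)
    have hc : (a*|a-1|)*(2-a) ≤ 4 := by
      rcases abs_cases (a-1) with ⟨he, h1a⟩ | ⟨he, h1a⟩ <;> rw [he]
      · have hq : a*(a-1) ≤ 2 := by nlinarith
        nlinarith [mul_le_mul_of_nonneg_right hq (by linarith : (0:ℝ) ≤ 2-a)]
      · have hq : a*(-(a-1)) ≤ 1/4 := by nlinarith [sq_nonneg (2*a-1)]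
        nlinarith [mul_le_mul_of_nonneg_right hq (by linarith : (0:ℝ) ≤ 2-a)]
    have hc0 : 0 ≤ a*|a-1| := mul_nonneg ha0.le (abs_nonneg _)
    nlinarith [mul_nonneg (sub_nonneg.2 hc) (sub_nonneg.2 hB'A'),
      mul_nonneg hc0 (sub_nonneg.2 hB'A'), sub_nonneg.2 hBB', sub_nonneg.2 hAA',
      sub_nonneg.2 hBA, mul_nonneg (mul_nonneg hc0 (by linarith : (0:ℝ) ≤ 2-a)) (sub_nonneg.2 hB'A')]

lemma abs_Fa''_le (a : ℝ) (ha0 : 0 < a) (ha2 : a < 2) {u : ℝ} (hu0 : 0 ≤ u)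
    (hu : u ≤ 1/3) : |Fa'' a u| ≤ Ga'' u := by
  have hm1 : u ∈ Set.Icc (0:ℝ) (2/3:ℝ) := ⟨hu0, by linarith⟩
  have hm2 : 2*u ∈ Set.Icc (0:ℝ) (2/3:ℝ) := ⟨by linarith, by linarith⟩
  have hle : u ≤ 2*u := by linarith
  have hk1 := mono_k (a-2) (by linarith) hm1 hm2 hle
  have hk2 := mono_P a ha0 ha2 hm1 hm2 hle
  simp only [] at hk1 hk2
  set K1 := (1+u)^(a-2) + (1-u)^(a-2) with hK1
  set K2 := (1+2*u)^(a-2) + (1-2*u)^(a-2) with hK2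
  set L1 := (1+u)^(-2:ℝ) + (1-u)^(-2:ℝ) with hL1
  set L2 := (1+2*u)^(-2:ℝ) + (1-2*u)^(-2:ℝ) with hL2
  have hFa2 : Fa'' a u = -(4*(a*(a-1))) * (K2 - K1) := by
    rw [hK1, hK2]; unfold Fa''; ring
  have hGa2 : Ga'' u = 8 * (L2 - L1) := by
    rw [hL1, hL2]; unfold Ga''; ring
  have hD : 0 ≤ K2 - K1 := by linarith
  have hP : (a*|a-1|) * (K2 - K1) ≤ 2 * (L2 - L1) := by linarith
  have habs1 : a*(a-1) ≤ a*|a-1| := by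
    have := le_abs_self (a-1); nlinarith
  have habs2 : -(a*(a-1)) ≤ a*|a-1| := by
    have := neg_abs_le (a-1); nlinarith
  rw [abs_le, hFa2, hGa2]
  constructor
  · nlinarith [mul_le_mul_of_nonneg_right habs1 hD]
  · nlinarith [mul_le_mul_of_nonneg_right habs2 hD]

lemma nonneg_aux (f f' f'' : ℝ → ℝ)
    (hder1 : ∀ u ∈ Set.Icc (0:ℝ) (1/3:ℝ), HasDerivAt f (f' u) u)
    (hder2 : ∀ u ∈ Set.Icc (0:ℝ) (1/3:ℝ), HasDerivAt f' (f'' u) u)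
    (h0 : f 0 = 0) (h0' : f' 0 = 0)
    (h2 : ∀ u ∈ Set.Icc (0:ℝ) (1/3:ℝ), 0 ≤ f'' u)
    {x : ℝ} (hx : x ∈ Set.Icc (0:ℝ) (1/3:ℝ)) : 0 ≤ f x := by
  have h0mem : (0:ℝ) ∈ Set.Icc (0:ℝ) (1/3:ℝ) := ⟨le_refl _, by norm_num⟩
  have m' : MonotoneOn f' (Set.Icc (0:ℝ) (1/3:ℝ)) := by
    apply monotoneOn_of_deriv_nonneg (convex_Icc _ _)
    · exact fun u hu => (hder2 u hu).differentiableAt.continuousAt.continuousWithinAt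
    · intro u hu
      rw [interior_Icc] at hu
      exact (hder2 u (Set.mem_Icc_of_Ioo hu)).differentiableAt.differentiableWithinAt
    · intro u hu
      rw [interior_Icc] at hu
      rw [(hder2 u (Set.mem_Icc_of_Ioo hu)).deriv]
      exact h2 u (Set.mem_Icc_of_Ioo hu)
  have wait := m'
  have m : MonotoneOn f (Set.Icc (0:ℝ) (1/3:ℝ)) := by
    apply monotoneOn_of_deriv_nonneg (convex_Icc _ _)
    · exact fun u hu => (hder1 u hu).differentiableAt.continuousAt.continuousWithinAt
    · intro u hu
      rw [interior_Icc] at hu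
      exact (hder1 u (Set.mem_Icc_of_Ioo hu)).differentiableAt.differentiableWithinAt
    · intro u hu
      rw [interior_Icc] at hu
      rw [(hder1 u (Set.mem_Icc_of_Ioo hu)).deriv]
      have := m' h0mem (Set.mem_Icc_of_Ioo hu) hu.1.le
      rw [h0'] at this
      exact this
  have := m h0mem hx hx.1
  rw [h0] at this
  exact this

lemma abs_Fa_le (a : ℝ) (ha0 : 0 < a) (ha2 : a < 2) {x : ℝ} (hx0 : 0 ≤ x)
    (hx : x ≤ 1/3) : |Fa a x| ≤ Ga x := by
  have hposs : ∀ u ∈ Set.Icc (0:ℝ) (1/3:ℝ),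
      (0:ℝ) < 1+u ∧ (0:ℝ) < 1-u ∧ (0:ℝ) < 1+2*u ∧ (0:ℝ) < 1-2*u := by
    rintro u ⟨h0, h1⟩
    refine ⟨by linarith, by linarith, by linarith, by linarith⟩
  have hF0 : Fa a 0 = 0 := by
    unfold Fa; norm_num
  have hF0' : Fa' a 0 = 0 := by
    unfold Fa'; norm_num
  have hG0 : Ga 0 = 0 := by
    unfold Ga; norm_num
  have hG0' : Ga' 0 = 0 := by
    unfold Ga'; norm_num
  have hxmem : x ∈ Set.Icc (0:ℝ) (1/3:ℝ) := ⟨hx0, hx⟩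
  rw [abs_le]
  constructor
  · have := nonneg_aux (fun u => Ga u + Fa a u) (fun u => Ga' u + Fa' a u)
      (fun u => Ga'' u + Fa'' a u)
      (fun u hu => by
        obtain ⟨p1, p2, p3, p4⟩ := hposs u hu
        exact (hGa p1 p2 p3 p4).add (hFa a p1 p2 p3 p4))
      (fun u hu => by
        obtain ⟨p1, p2, p3, p4⟩ := hposs u hu
        exact (hGa' p1 p2 p3 p4).add (hFa' a p1 p2 p3 p4))
      (by show Ga 0 + Fa a 0 = 0; rw [hG0, hF0]; ring)
      (by show Ga' 0 + Fa' a 0 = 0; rw [hG0', hF0']; ring)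
      (fun u hu => by
        show 0 ≤ Ga'' u + Fa'' a u
        have := abs_Fa''_le a ha0 ha2 hu.1 hu.2
        have h' := neg_abs_le (Fa'' a u)
        linarith)
      hxmem
    have h2 : 0 ≤ Ga x + Fa a x := this
    linarith
  · have := nonneg_aux (fun u => Ga u - Fa a u) (fun u => Ga' u - Fa' a u)
      (fun u => Ga'' u - Fa'' a u)
      (fun u hu => by
        obtain ⟨p1, p2, p3, p4⟩ := hposs u hu
        exact (hGa p1 p2 p3 p4).sub (hFa a p1 p2 p3 p4))
      (fun u hu => by
        obtain ⟨p1, p2, p3, p4⟩ := hposs u hu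
        exact (hGa' p1 p2 p3 p4).sub (hFa' a p1 p2 p3 p4))
      (by show Ga 0 - Fa a 0 = 0; rw [hG0, hF0]; ring)
      (by show Ga' 0 - Fa' a 0 = 0; rw [hG0', hF0']; ring)
      (fun u hu => by
        show 0 ≤ Ga'' u - Fa'' a u
        have := abs_Fa''_le a ha0 ha2 hu.1 hu.2
        have h' := le_abs_self (Fa'' a u)
        linarith)
      hxmem
    have h2 : 0 ≤ Ga x - Fa a x := this
    linarith

set_option maxHeartbeats 2000000 in
theorem stmt_6 (H : ℝ) (hH : H ∈ Set.Ioo (0 : ℝ) 1) (r : ℕ) (hr : 3 ≤ r) :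
    |rhoH H (r : ℤ)|
        ≤ 4 * (r : ℝ) ^ (2 * H) * Real.log (1 - 1 / (r : ℝ) ^ 2)
          - (r : ℝ) ^ (2 * H) * Real.log (1 - 4 / (r : ℝ) ^ 2) ∧
      4 * (r : ℝ) ^ (2 * H) * Real.log (1 - 1 / (r : ℝ) ^ 2)
          - (r : ℝ) ^ (2 * H) * Real.log (1 - 4 / (r : ℝ) ^ 2)
        ≤ (243 / 20) * (r : ℝ) ^ (2 * H - 4) ∧
      (243 / 20) * (r : ℝ) ^ (2 * H - 4) ≤ (243 / 20) * (r : ℝ) ^ (-2 : ℝ) := by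
  obtain ⟨hH0, hH1⟩ := hH
  have ha0 : (0:ℝ) < 2*H := by linarith
  have ha2 : (2:ℝ)*H < 2 := by linarith
  have hr3 : (3:ℝ) ≤ (r:ℝ) := by exact_mod_cast hr
  have hr0 : (0:ℝ) < (r:ℝ) := by linarith
  obtain ⟨a, ha⟩ : ∃ a : ℝ, a = 2*H := ⟨_, rfl⟩
  obtain ⟨t, ht⟩ : ∃ t : ℝ, t = 1/(r:ℝ) := ⟨_, rfl⟩
  rw [← ha] at ha0 ha2 ⊢
  have ht0 : 0 < t := by rw [ht]; positivity
  have ht3 : t ≤ 1/3 := by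
    rw [ht, div_le_div_iff₀ hr0 (by norm_num)]; linarith
  have p1 : (0:ℝ) < 1 + t := by linarith
  have p2 : (0:ℝ) < 1 - t := by linarith
  have p3 : (0:ℝ) < 1 + 2*t := by linarith
  have p4 : (0:ℝ) < 1 - 2*t := by linarith
  have hrt : (r:ℝ) * t = 1 := by
    rw [ht]; field_simp
  have b1 : (r:ℝ) + 1 = (r:ℝ) * (1+t) := by rw [mul_add, mul_one, hrt]
  have b2 : (r:ℝ) - 1 = (r:ℝ) * (1-t) := by rw [mul_sub, mul_one, hrt]
  have b3 : (r:ℝ) + 2 = (r:ℝ) * (1+2*t) := by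
    rw [mul_add, mul_one]
    have : (r:ℝ) * (2*t) = 2 := by rw [mul_comm (2:ℝ) t, ← mul_assoc, hrt, one_mul]
    rw [this]
  have b4 : (r:ℝ) - 2 = (r:ℝ) * (1-2*t) := by
    rw [mul_sub, mul_one]
    have : (r:ℝ) * (2*t) = 2 := by rw [mul_comm (2:ℝ) t, ← mul_assoc, hrt, one_mul]
    rw [this]
  have hra : (0:ℝ) < (r:ℝ)^a := Real.rpow_pos_of_pos hr0 a
  have key : rhoH H (r : ℤ) = (r:ℝ)^a * Fa a t / 2 := by
    unfold rhoH Fa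
    rw [← ha]
    push_cast
    rw [abs_of_nonneg (by linarith : (0:ℝ) ≤ (r:ℝ) - 2),
      abs_of_nonneg (by linarith : (0:ℝ) ≤ (r:ℝ) - 1),
      abs_of_nonneg hr0.le,
      abs_of_nonneg (by linarith : (0:ℝ) ≤ (r:ℝ) + 1),
      abs_of_nonneg (by linarith : (0:ℝ) ≤ (r:ℝ) + 2),
      b1, b2, b3, b4,
      Real.mul_rpow hr0.le p1.le, Real.mul_rpow hr0.le p2.le,
      Real.mul_rpow hr0.le p3.le, Real.mul_rpow hr0.le p4.le]
    ring
  have e1 : 1 - 1/(r:ℝ)^2 = (1+t)*(1-t) := by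
    rw [ht]; field_simp; ring
  have e2 : 1 - 4/(r:ℝ)^2 = (1+2*t)*(1-2*t) := by
    rw [ht]; field_simp; ring
  have eG : 4 * (r:ℝ)^a * Real.log (1 - 1/(r:ℝ)^2)
      - (r:ℝ)^a * Real.log (1 - 4/(r:ℝ)^2) = (r:ℝ)^a * Ga t / 2 := by
    rw [e1, e2, Real.log_mul p1.ne' p2.ne', Real.log_mul p3.ne' p4.ne']
    unfold Ga; ring
  refine ⟨?_, ?_, ?_⟩
  · rw [key, eG, abs_div, abs_mul, abs_of_pos hra]
    have h2 : |(2:ℝ)| = 2 := by norm_num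
    rw [h2]
    have := abs_Fa_le a ha0 ha2 ht0.le ht3
    have hmul : (r:ℝ)^a * |Fa a t| ≤ (r:ℝ)^a * Ga t :=
      mul_le_mul_of_nonneg_left this hra.le
    linarith
  · rw [eG]
    have hz1 : (0:ℝ) < (1+t)*(1-t) := mul_pos p1 p2
    have hz2 : (0:ℝ) < (1+2*t)*(1-2*t) := mul_pos p3 p4
    have hganorm : Ga t / 2 = Real.log (((1+t)*(1-t))^(4:ℕ) / ((1+2*t)*(1-2*t))) := by
      rw [Real.log_div (pow_ne_zero _ hz1.ne') hz2.ne', Real.log_pow,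
        Real.log_mul p1.ne' p2.ne', Real.log_mul p3.ne' p4.ne']
      unfold Ga; push_cast; ring
    have hlog := Real.log_le_sub_one_of_pos (div_pos (pow_pos hz1 4) hz2)
    have ht2 : t^2 ≤ 1/9 := by nlinarith
    have hfac : t^4 + (223/5)*t^2 - 123/20 ≤ 0 := by
      nlinarith [mul_le_mul_of_nonneg_left ht2 (sq_nonneg t)]
    have hpoly : ((1+t)*(1-t))^(4:ℕ) / ((1+2*t)*(1-2*t)) - 1 ≤ (243/20) * t^4 := by
      rw [div_sub_one hz2.ne', div_le_iff₀ hz2]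
      have hmain : t^4 * (t^4 + (223/5)*t^2 - 123/20) ≤ 0 :=
        mul_nonpos_of_nonneg_of_nonpos (pow_nonneg ht0.le 4) hfac
      nlinarith [hmain, sq_nonneg t]
    have hGle : Ga t / 2 ≤ (243/20) * t^4 := by
      rw [hganorm]; linarith
    have hr4 : (r:ℝ)^a * t^4 = (r:ℝ)^(a-4) := by
      rw [Real.rpow_sub hr0, ht]
      have h4 : (r:ℝ)^(4:ℝ) = (r:ℝ)^(4:ℕ) := by
        rw [← Real.rpow_natCast]; norm_num
      rw [h4, div_pow, one_pow]
      field_simp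
    calc (r:ℝ)^a * Ga t / 2 = (r:ℝ)^a * (Ga t / 2) := by ring
      _ ≤ (r:ℝ)^a * ((243/20) * t^4) := mul_le_mul_of_nonneg_left hGle hra.le
      _ = (243/20) * ((r:ℝ)^a * t^4) := by ring
      _ = (243/20) * (r:ℝ)^(a-4) := by rw [hr4]
  · have : (r:ℝ)^(a-4) ≤ (r:ℝ)^(-2:ℝ) :=
      Real.rpow_le_rpow_of_exponent_le (by linarith) (by rw [ha] at ha2 ⊢; linarith)
    linarith
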